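/- arXiv:1903.01002 — 2 statements merged into one kernel-verified Lean document; each statement's English description precedes it below -/
import Mathlib

section
/- Let 2 ≤ r < k and let F' be obtained from a graph F by deleting one vertex. Suppose c > 0 satisfies ex(m, K_{r-1}, F') ≤ c·m for every positive integer m. Then every F-free graph G satisfies N(K_r, G) ≤ (2c/r)·|E(G)|. -/
open scoped Classical

/-- `G` contains a copy of `F`, i.e. a subgraph isomorphic to `F`. -/
def HasCopy {α V : Type*} (F : SimpleGraph α) (G : SimpleGraph V) : Prop :=
  ∃ φ : α ↪ V, ∀ ⦃a b : α⦄, F.Adj a b → G.Adj (φ a) (φ b)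

/-- `N(K_r, G)`: the number of copies of the complete graph `K_r` in `G`,
i.e. the number of `r`-cliques of `G`. -/
noncomputable def cliqueCount {V : Type*} (r : ℕ) (G : SimpleGraph V) : ℕ :=
  {s : Finset V | G.IsNClique r s}.ncard

/-- The number of edges of `G`. -/
noncomputable def edgeCount {V : Type*} (G : SimpleGraph V) : ℕ :=
  G.edgeSet.ncard

/-- The Turán number `ex(n, F)`: the maximum number of edges in an `F`-free graph
on `n` vertices. -/
noncomputable def exTuran {α : Type*} (n : ℕ) (F : SimpleGraph α) : ℕ :=
  sSup {m | ∃ G : SimpleGraph (Fin n), ¬ HasCopy F G ∧ edgeCount G = m}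

/-- The generalized Turán number `ex(n, K_r, F)`: the maximum number of copies of `K_r`
in an `F`-free graph on `n` vertices. -/
noncomputable def exClique {α : Type*} (n r : ℕ) (F : SimpleGraph α) : ℕ :=
  sSup {m | ∃ G : SimpleGraph (Fin n), ¬ HasCopy F G ∧ cliqueCount r G = m}

/-- The hypergraph `H` contains a Berge copy of the graph `F`: there is an injection `φ`
of the vertices of `F` and an injection `f` from the edges of `F` to the hyperedges of `H`
such that `φ '' e ⊆ f e` for every edge `e` of `F`. -/
def HasBergeCopy {α V : Type*} (F : SimpleGraph α) (H : Finset (Finset V)) : Prop :=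
  ∃ (φ : α ↪ V) (f : F.edgeSet → Finset V), Function.Injective f ∧
    ∀ e : F.edgeSet, f e ∈ H ∧ ∀ x ∈ (e : Sym2 α), φ x ∈ f e

/-- `ex_r(n, Berge-F)`: the maximum number of hyperedges in an `r`-uniform
Berge-`F`-free hypergraph on `n` vertices. -/
noncomputable def exBerge {α : Type*} (r n : ℕ) (F : SimpleGraph α) : ℕ :=
  sSup {m | ∃ H : Finset (Finset (Fin n)), (∀ e ∈ H, e.card = r) ∧
    ¬ HasBergeCopy F H ∧ H.card = m}

/-- A hypergraph is linear if any two distinct hyperedges share at most one vertex. -/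
def IsLinear {V : Type*} [DecidableEq V] (H : Finset (Finset V)) : Prop :=
  ∀ e₁ ∈ H, ∀ e₂ ∈ H, e₁ ≠ e₂ → (e₁ ∩ e₂).card ≤ 1

/-- `ex_r^{lin}(n, Berge-F)`: the maximum number of hyperedges in an `r`-uniform linear
Berge-`F`-free hypergraph on `n` vertices. -/
noncomputable def exBergeLin {α : Type*} (r n : ℕ) (F : SimpleGraph α) : ℕ :=
  sSup {m | ∃ H : Finset (Finset (Fin n)), (∀ e ∈ H, e.card = r) ∧ IsLinear H ∧
    ¬ HasBergeCopy F H ∧ H.card = m}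

/-- The graph obtained from `F₀` by subdividing the edge `uv`: delete the edge `uv` and
add a new vertex `none` joined to `u` and `v`. -/
def subdivideEdge {α : Type*} (F₀ : SimpleGraph α) (u v : α) : SimpleGraph (Option α) :=
  SimpleGraph.fromEdgeSet
    ((Sym2.map some '' F₀.edgeSet \ {s(some u, some v)}) ∪ {s(some u, none), s(some v, none)})

lemma cliqueCount_eq {V : Type*} [Fintype V] (r : ℕ) (G : SimpleGraph V) :
    cliqueCount r G = (Finset.univ.filter (fun s : Finset V => G.IsNClique r s)).card := by
  rw [cliqueCount, ← Set.ncard_coe_finset]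
  congr 1
  ext s; simp

lemma cliqueCount_le_exClique {α : Type*} {n r : ℕ} (F : SimpleGraph α)
    (H : SimpleGraph (Fin n)) (hH : ¬ HasCopy F H) : cliqueCount r H ≤ exClique n r F := by
  apply le_csSup
  · refine ⟨Fintype.card (Finset (Fin n)), ?_⟩
    rintro m ⟨K, -, rfl⟩
    calc cliqueCount r K ≤ (Set.univ : Set (Finset (Fin n))).ncard :=
          Set.ncard_le_ncard (Set.subset_univ _) Set.finite_univ
      _ = Fintype.card (Finset (Fin n)) := by
          simp [Set.ncard_univ, Nat.card_eq_fintype_card]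
  · exact ⟨H, hH, rfl⟩

/-- Let `2 ≤ r < k`, let `F'` be obtained from `F` by deleting a vertex, and
suppose `ex(m, K_{r-1}, F') ≤ c·m` for all `m ≥ 1`. Then every `F`-free graph `G` satisfies
`N(K_r, G) ≤ (2c/r)·|E(G)|`. -/
theorem clique_count_le_of_free {α V : Type*} [Fintype V] (r k : ℕ) (hr : 2 ≤ r) (hk : r < k)
    (F : SimpleGraph α) (w : α) (c : ℝ) (hc : 0 < c)
    (hF' : ∀ m : ℕ, 0 < m →
      (exClique m (r - 1) (F.induce {x | x ≠ w}) : ℝ) ≤ c * m)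
    (G : SimpleGraph V) (hG : ¬ HasCopy F G) :
    (cliqueCount r G : ℝ) ≤ (2 * c / r) * edgeCount G := by
  classical
  set C : Finset (Finset V) := Finset.univ.filter (fun s => G.IsNClique r s) with hCdef
  -- per-vertex bound
  have key : ∀ v : V, ((C.filter (fun s => v ∈ s)).card : ℝ) ≤ c * G.degree v := by
    intro v
    set D : Finset (Finset V) := Finset.univ.filter
      (fun t => t ⊆ G.neighborFinset v ∧ G.IsNClique (r - 1) t) with hDdef
    have hAD : (C.filter (fun s => v ∈ s)).card ≤ D.card := by
      apply Finset.card_le_card_of_injOn (fun s => s.erase v)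
      · intro s hs
        simp only [hCdef, hDdef, Finset.mem_coe, Finset.mem_filter, Finset.mem_univ, true_and] at hs ⊢
        obtain ⟨hscl, hv⟩ := hs
        refine ⟨?_, ?_⟩
        · intro x hx
          rw [Finset.mem_erase] at hx
          rw [SimpleGraph.mem_neighborFinset]
          exact hscl.1 (by simpa using hv) (by simpa using hx.2) (Ne.symm hx.1)
        · exact ⟨hscl.1.subset (by simpa using Finset.erase_subset v s),
            by rw [Finset.card_erase_of_mem hv, hscl.2]⟩
      · intro s₁ h₁ s₂ h₂ h
        simp only [Finset.mem_coe, Finset.mem_filter] at h₁ h₂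
        have h' : s₁.erase v = s₂.erase v := h
        rw [← Finset.insert_erase h₁.2, h', Finset.insert_erase h₂.2]
    rcases Nat.eq_zero_or_pos (G.degree v) with hdeg | hdeg
    · have hD0 : D = ∅ := by
        rw [Finset.eq_empty_iff_forall_notMem]
        intro t ht
        simp only [hDdef, Finset.mem_filter, Finset.mem_univ, true_and] at ht
        have : t = ∅ := by
          have h1 := Finset.card_le_card ht.1
          rw [SimpleGraph.card_neighborFinset_eq_degree, hdeg] at h1
          exact Finset.card_eq_zero.mp (Nat.le_zero.mp h1)
        rw [this] at ht
        have := ht.2.2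
        simp at this
        omega
      rw [hD0] at hAD
      simp only [Finset.card_empty, Nat.le_zero] at hAD
      rw [hAD]
      simp [hdeg]
    · -- set up the neighborhood graph on Fin (degree v)
      set n := G.degree v with hn
      have hcardN : (G.neighborFinset v).card = n := rfl
      set e : (G.neighborFinset v : Finset V) ≃ Fin n :=
        (G.neighborFinset v).equivFin.trans (finCongr hcardN) with he
      set f : Fin n → V := fun i => ((e.symm i : (G.neighborFinset v : Finset V)) : V) with hf
      have hfinj : Function.Injective f := by
        intro i j hij
        have := Subtype.val_injective hij
        exact e.symm.injective this
      have hfmem : ∀ i, f i ∈ G.neighborFinset v := fun i => (e.symm i).2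
      have hfadj : ∀ i, G.Adj v (f i) := fun i => (SimpleGraph.mem_neighborFinset _ _ _).mp (hfmem i)
      have hfsurj : ∀ x ∈ G.neighborFinset v, ∃ i, f i = x := by
        intro x hx
        exact ⟨e ⟨x, hx⟩, by simp [hf]⟩
      set Gv : SimpleGraph (Fin n) := G.comap f with hGv
      -- Gv is F'-free
      have hGvfree : ¬ HasCopy (F.induce {x | x ≠ w}) Gv := by
        rintro ⟨φ, hφ⟩
        apply hG
        refine ⟨⟨fun x => if h : x = w then v else f (φ ⟨x, h⟩), ?_⟩, ?_⟩
        · intro a b hab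
          dsimp only at hab
          by_cases ha : a = w
          · by_cases hb : b = w
            · rw [ha, hb]
            · rw [dif_pos ha, dif_neg hb] at hab
              exact absurd hab (hfadj _).ne
          · by_cases hb : b = w
            · rw [dif_neg ha, dif_pos hb] at hab
              exact absurd hab.symm (hfadj _).ne
            · rw [dif_neg ha, dif_neg hb] at hab
              exact congrArg Subtype.val (φ.injective (hfinj hab))
        · intro a b hab
          show G.Adj (if h : a = w then v else f (φ ⟨a, h⟩)) (if h : b = w then v else f (φ ⟨b, h⟩))
          by_cases ha : a = w
          · have hb : b ≠ w := fun h => F.irrefl (ha ▸ h ▸ hab)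
            rw [dif_pos ha, dif_neg hb]
            exact hfadj _
          · by_cases hb : b = w
            · rw [dif_neg ha, dif_pos hb]
              exact (hfadj _).symm
            · rw [dif_neg ha, dif_neg hb]
              have : (F.induce {x | x ≠ w}).Adj ⟨a, ha⟩ ⟨b, hb⟩ := by
                simpa [SimpleGraph.comap_adj] using hab
              exact hφ this
      -- injection from D into cliques of Gv
      have hDle : D.card ≤ cliqueCount (r - 1) Gv := by
        rw [cliqueCount_eq]
        apply Finset.card_le_card_of_injOn
          (fun t => Finset.univ.filter (fun i : Fin n => f i ∈ t))
        · intro t ht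
          simp only [hDdef, Finset.mem_coe, Finset.mem_filter, Finset.mem_univ, true_and] at ht ⊢
          have himg : (Finset.univ.filter (fun i : Fin n => f i ∈ t)).image f = t := by
            apply Finset.Subset.antisymm
            · intro x hx
              simp only [Finset.mem_image, Finset.mem_filter, Finset.mem_univ, true_and] at hx
              obtain ⟨i, hi, rfl⟩ := hx
              exact hi
            · intro x hx
              obtain ⟨i, rfl⟩ := hfsurj x (ht.1 hx)
              simp only [Finset.mem_image, Finset.mem_filter, Finset.mem_univ, true_and]
              exact ⟨i, hx, rfl⟩
          constructor
          · intro i hi j hj hij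
            simp only [Finset.coe_filter, Set.mem_setOf_eq, Finset.mem_univ, true_and] at hi hj
            exact ht.2.1 (by simpa using hi) (by simpa using hj) (fun h => hij (hfinj h))
          · have hc2 := Finset.card_image_of_injective
              (Finset.univ.filter fun i : Fin n => f i ∈ t) hfinj
            rw [himg] at hc2
            rw [← hc2]
            exact ht.2.2
        · intro t₁ h₁ t₂ h₂ h
          simp only [hDdef, Finset.mem_coe, Finset.mem_filter, Finset.mem_univ, true_and] at h₁ h₂
          have himg : ∀ t ∈ D, (Finset.univ.filter (fun i : Fin n => f i ∈ t)).image f = t := by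
            intro t ht
            simp only [hDdef, Finset.mem_filter, Finset.mem_univ, true_and] at ht
            apply Finset.Subset.antisymm
            · intro x hx
              simp only [Finset.mem_image, Finset.mem_filter, Finset.mem_univ, true_and] at hx
              obtain ⟨i, hi, rfl⟩ := hx
              exact hi
            · intro x hx
              obtain ⟨i, rfl⟩ := hfsurj x (ht.1 hx)
              simp only [Finset.mem_image, Finset.mem_filter, Finset.mem_univ, true_and]
              exact ⟨i, hx, rfl⟩
          have m₁ : t₁ ∈ D := by simp only [hDdef, Finset.mem_filter, Finset.mem_univ, true_and]; exact h₁
          have m₂ : t₂ ∈ D := by simp only [hDdef, Finset.mem_filter, Finset.mem_univ, true_and]; exact h₂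
          have h' : Finset.univ.filter (fun i : Fin n => f i ∈ t₁)
              = Finset.univ.filter (fun i : Fin n => f i ∈ t₂) := h
          rw [← himg t₁ m₁, h', himg t₂ m₂]
      have hchain : (D.card : ℝ) ≤ c * n := by
        calc (D.card : ℝ) ≤ (cliqueCount (r - 1) Gv : ℝ) := by exact_mod_cast hDle
          _ ≤ (exClique n (r - 1) (F.induce {x | x ≠ w}) : ℝ) := by
              exact_mod_cast cliqueCount_le_exClique _ Gv hGvfree
          _ ≤ c * n := hF' n hdeg
      calc ((C.filter (fun s => v ∈ s)).card : ℝ) ≤ (D.card : ℝ) := by exact_mod_cast hAD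
        _ ≤ c * n := hchain
  -- double counting
  have hsum : r * C.card = ∑ v : V, (C.filter (fun s => v ∈ s)).card := by
    have h1 : ∀ s ∈ C, s.card = r := by
      intro s hs
      simp only [hCdef, Finset.mem_filter, Finset.mem_univ, true_and] at hs
      exact hs.2
    calc r * C.card = ∑ _s ∈ C, r := by rw [Finset.sum_const, smul_eq_mul, Nat.mul_comm]
      _ = ∑ s ∈ C, s.card := Finset.sum_congr rfl (fun s hs => (h1 s hs).symm)
      _ = ∑ s ∈ C, (Finset.univ.filter (fun v => v ∈ s)).card := by
          refine Finset.sum_congr rfl (fun s _ => ?_)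
          congr 1
          ext x
          simp
      _ = ∑ s ∈ C, ∑ v : V, if v ∈ s then 1 else 0 :=
          Finset.sum_congr rfl (fun s _ => Finset.card_filter _ _)
      _ = ∑ v : V, ∑ s ∈ C, if v ∈ s then 1 else 0 := Finset.sum_comm
      _ = ∑ v : V, (C.filter (fun s => v ∈ s)).card :=
          Finset.sum_congr rfl (fun v _ => (Finset.card_filter _ _).symm)
  have hEdge : (edgeCount G : ℝ) = G.edgeFinset.card := by
    rw [edgeCount, Set.ncard_eq_toFinset_card']
    exact_mod_cast congrArg Finset.card (by ext; simp : G.edgeSet.toFinset = G.edgeFinset)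
  have hdegsum : ∑ v : V, (G.degree v : ℝ) = 2 * edgeCount G := by
    rw [hEdge]
    exact_mod_cast congrArg (Nat.cast : ℕ → ℝ) (SimpleGraph.sum_degrees_eq_twice_card_edges G)
  have hmain : (r : ℝ) * cliqueCount r G ≤ c * (2 * edgeCount G) := by
    have hCC : cliqueCount r G = C.card := cliqueCount_eq r G
    rw [hCC]
    calc (r : ℝ) * C.card = ∑ v : V, ((C.filter (fun s => v ∈ s)).card : ℝ) := by
          exact_mod_cast congrArg (Nat.cast : ℕ → ℝ) hsum
      _ ≤ ∑ v : V, c * G.degree v := Finset.sum_le_sum (fun v _ => key v)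
      _ = c * ∑ v : V, (G.degree v : ℝ) := by rw [Finset.mul_sum]
      _ = c * (2 * edgeCount G) := by rw [hdegsum]
  have hrpos : (0 : ℝ) < r := by positivity
  rw [div_mul_eq_mul_div, le_div_iff₀ hrpos]
  linarith [hmain]
end

section
/- Let 2 ≤ r < k. For every n, ex_r(n, Berge-K_k) ≥ N(K_r, T(n, k−1)); indeed, the r-uniform hypergraph on n vertices whose hyperedges are the vertex sets of the copies of K_r in the Turán graph T(n, k−1) contains no Berge copy of K_k. -/
open scoped Classical

/-- For `2 ≤ r < k`, the `r`-uniform hypergraph on `n` vertices whose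
hyperedges are the vertex sets of copies of `K_r` in the Turán graph `T(n, k-1)` has no Berge
copy of `K_k`; consequently `ex_r(n, Berge-K_k) ≥ N(K_r, T(n, k-1))`. -/
theorem turan_cliques_berge_free (r k n : ℕ) (hr : 2 ≤ r) (hk : r < k) :
    ¬ HasBergeCopy (SimpleGraph.completeGraph (Fin k))
        (Finset.univ.filter fun s : Finset (Fin n) =>
          (SimpleGraph.turanGraph n (k - 1)).IsNClique r s) ∧
      cliqueCount r (SimpleGraph.turanGraph n (k - 1)) ≤
        exBerge r n (SimpleGraph.completeGraph (Fin k)) := by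
  have hk1 : 0 < k - 1 := by omega
  have hfree : (SimpleGraph.turanGraph n (k - 1)).CliqueFree k := by
    have := SimpleGraph.turanGraph_cliqueFree (n := n) hk1
    rwa [Nat.sub_add_cancel (by omega)] at this
  have hnb : ¬ HasBergeCopy (SimpleGraph.completeGraph (Fin k))
      (Finset.univ.filter fun s : Finset (Fin n) =>
        (SimpleGraph.turanGraph n (k - 1)).IsNClique r s) := by
    rintro ⟨φ, f, hfinj, hf⟩
    apply hfree (Finset.univ.image φ)
    constructor
    · rintro a ha b hb hne
      simp only [Finset.coe_image, Set.mem_image, Finset.coe_univ, Set.image_univ,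
        Set.mem_range] at ha hb
      obtain ⟨i, rfl⟩ := ha
      obtain ⟨j, rfl⟩ := hb
      have hij : i ≠ j := fun h => hne (by rw [h])
      have he : s(i, j) ∈ (SimpleGraph.completeGraph (Fin k)).edgeSet := (SimpleGraph.mem_edgeSet _).mpr hij
      obtain ⟨h1, h2⟩ := hf ⟨s(i, j), he⟩
      simp only [Finset.mem_filter] at h1
      exact h1.2.isClique (h2 i (by simp)) (h2 j (by simp)) hne
    · rw [Finset.card_image_of_injective _ φ.injective, Finset.card_univ, Fintype.card_fin]
  refine ⟨hnb, ?_⟩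
  have hcc : cliqueCount r (SimpleGraph.turanGraph n (k - 1)) =
      (Finset.univ.filter fun s : Finset (Fin n) =>
        (SimpleGraph.turanGraph n (k - 1)).IsNClique r s).card := by
    rw [cliqueCount, show {s : Finset (Fin n) | (SimpleGraph.turanGraph n (k - 1)).IsNClique r s}
      = ↑(Finset.univ.filter fun s : Finset (Fin n) =>
        (SimpleGraph.turanGraph n (k - 1)).IsNClique r s) by ext s; simp, Set.ncard_coe_finset]
  rw [hcc]
  apply le_csSup
  · refine ⟨2 ^ n, ?_⟩
    rintro m ⟨H, -, -, rfl⟩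
    calc H.card ≤ (Finset.univ : Finset (Finset (Fin n))).card :=
          Finset.card_le_card (Finset.subset_univ H)
      _ = 2 ^ n := by simp
  · exact ⟨_, fun e he => ((Finset.mem_filter.mp he).2).card_eq, hnb, rfl⟩
end
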